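/- Let p ≥ 1 be an odd integer, κ < 0, α := −κ > 0, and λ < 0, and let c < 0 be the unique real root of κ + λ·s^p = 0. Let y₀ < c, and define the escape time T_esc := (1/(p·α))·ln( (λ/α) / (λ/α − y₀^{−p}) ), which is well-defined and positive since λ/α < y₀^{−p} < 0. Then there is no differentiable function y : [0, T_esc] → ℝ satisfying ẏ(t) = κ·y(t) + λ·y(t)^{p+1} for all t ∈ [0, T_esc] with y(0) = y₀; i.e., the solution escapes to −∞ in finite time (finite-time blow-down), before T_esc. -/

import Mathlib

open Set Real

/-- Key lemma: if `y` solves the ODE on `[0,b]` and stays negative there, then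
`u = (y^p)⁻¹` satisfies the explicit linear formula. -/
lemma ode_inv_formula (p : ℕ) (κ α lam : ℝ) (hα : α = -κ)
    (b : ℝ) (hb : 0 ≤ b) (y : ℝ → ℝ)
    (hy : ∀ t ∈ Set.Icc (0 : ℝ) b,
      HasDerivWithinAt y (κ * y t + lam * y t ^ (p + 1)) (Set.Icc (0 : ℝ) b) t)
    (hneg : ∀ t ∈ Set.Icc (0 : ℝ) b, y t ≠ 0)
    (hαpos : 0 < α) (hp : 1 ≤ p) :
    ∀ t ∈ Set.Icc (0 : ℝ) b,
      (y t ^ p)⁻¹ = ((y 0 ^ p)⁻¹ - lam / α) * Real.exp ((p : ℝ) * α * t) + lam / α := by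
  set u : ℝ → ℝ := fun t => (y t ^ p)⁻¹ with hu
  have hαne : α ≠ 0 := ne_of_gt hαpos
  -- derivative of u
  have hdu : ∀ t ∈ Set.Icc (0 : ℝ) b,
      HasDerivWithinAt u ((p : ℝ) * α * u t - (p : ℝ) * lam) (Set.Icc (0 : ℝ) b) t := by
    intro t ht
    have hyt := hy t ht
    have hne := hneg t ht
    have h1 : HasDerivWithinAt (fun s => y s ^ p)
        ((p : ℝ) * y t ^ (p - 1) * (κ * y t + lam * y t ^ (p + 1))) (Set.Icc (0:ℝ) b) t :=
      hyt.pow p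
    have h2 := h1.inv (pow_ne_zero p hne)
    have hpows : y t ^ (p - 1) * y t = y t ^ p := by
      rw [← pow_succ]
      congr 1
      omega
    have hpows2 : y t ^ (p - 1) * y t ^ (p + 1) = (y t ^ p) ^ 2 := by
      rw [← pow_add, ← pow_mul]
      congr 1
      omega
    have hne2 : y t ^ p ≠ 0 := pow_ne_zero p hne
    have key : -((p:ℝ) * y t ^ (p - 1) * (κ * y t + lam * y t ^ (p + 1))) / (y t ^ p) ^ 2
        = (p : ℝ) * α * (y t ^ p)⁻¹ - (p : ℝ) * lam := by
      have e1 : (p:ℝ) * y t ^ (p - 1) * (κ * y t + lam * y t ^ (p + 1))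
          = (p:ℝ) * κ * (y t ^ p) + (p:ℝ) * lam * (y t ^ p) ^ 2 := by
        rw [← hpows2, ← hpows]; ring
      rw [e1, hα]
      field_simp
      ring
    simp only [hu]
    rw [← key]
    exact h2
  -- w is constant
  set w : ℝ → ℝ := fun t => (u t - lam / α) * Real.exp (-((p : ℝ) * α * t)) with hw
  have hdw : ∀ t ∈ Set.Icc (0 : ℝ) b, HasDerivWithinAt w 0 (Set.Icc (0 : ℝ) b) t := by
    intro t ht
    have h1 : HasDerivWithinAt (fun s => u s - lam / α)
        ((p : ℝ) * α * u t - (p : ℝ) * lam) (Set.Icc (0:ℝ) b) t := (hdu t ht).sub_const _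
    have h2 : HasDerivWithinAt (fun s => Real.exp (-((p : ℝ) * α * s)))
        (Real.exp (-((p : ℝ) * α * t)) * (-((p : ℝ) * α))) (Set.Icc (0:ℝ) b) t := by
      have : HasDerivWithinAt (fun s : ℝ => -((p : ℝ) * α * s)) (-((p : ℝ) * α))
          (Set.Icc (0:ℝ) b) t := by
        simpa using ((hasDerivWithinAt_id t (Set.Icc (0:ℝ) b)).const_mul ((p:ℝ)*α)).fun_neg
      simpa using this.exp
    have h3 := h1.mul h2
    have hla : ((p:ℝ) * α) * (lam / α) = (p:ℝ) * lam := by field_simp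
    have key : ((p : ℝ) * α * u t - (p : ℝ) * lam) * Real.exp (-((p:ℝ) * α * t)) +
        (u t - lam / α) * (Real.exp (-((p:ℝ) * α * t)) * -((p:ℝ) * α)) = 0 := by
      calc ((p : ℝ) * α * u t - (p : ℝ) * lam) * Real.exp (-((p:ℝ) * α * t)) +
          (u t - lam / α) * (Real.exp (-((p:ℝ) * α * t)) * -((p:ℝ) * α))
          = Real.exp (-((p:ℝ) * α * t)) * (((p:ℝ) * α) * (lam / α) - (p:ℝ) * lam) := by ring
        _ = 0 := by rw [hla]; ring
    have h4 := h3
    rw [key] at h4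
    exact h4
  have hconst : ∀ t ∈ Set.Icc (0 : ℝ) b, w t = w 0 := by
    apply constant_of_has_deriv_right_zero
    · intro t ht
      exact (hdw t ht).continuousWithinAt
    · intro x hx
      exact (hdw x (Set.Ico_subset_Icc_self hx)).mono_of_mem_nhdsWithin (Icc_mem_nhdsGE_of_mem hx)
  intro t ht
  have h := hconst t ht
  have h0 : w 0 = u 0 - lam / α := by simp [hw]
  rw [h0] at h
  have hEE : Real.exp (-((p:ℝ) * α * t)) * Real.exp ((p:ℝ) * α * t) = 1 := by
    rw [← Real.exp_add]; simp
  have h' := congrArg (fun z => z * Real.exp ((p:ℝ) * α * t)) h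
  simp only [hw] at h'
  rw [mul_assoc, hEE, mul_one] at h'
  -- h' : u t - lam / α = (u 0 - lam / α) * exp (pαt)
  have : u t = (u 0 - lam / α) * Real.exp ((p : ℝ) * α * t) + lam / α := by linarith
  simpa [hu] using this

/-- Finite-time blow-down to −∞ for an odd-p mode with y₀ < c < 0. -/
theorem stmt_16 (p : ℕ) (hp : 1 ≤ p) (hpo : Odd p)
    (κ : ℝ) (hκ : κ < 0) (α : ℝ) (hα : α = -κ)
    (lam : ℝ) (hlam : lam < 0)
    (c : ℝ) (hcneg : c < 0) (hc : κ + lam * c ^ p = 0)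
    (y₀ : ℝ) (hy₀ : y₀ < c)
    (T : ℝ)
    (hT : T = (1 / ((p : ℝ) * α)) *
      Real.log ((lam / α) / (lam / α - y₀ ^ (-(p : ℤ))))) :
    lam / α < y₀ ^ (-(p : ℤ)) ∧ y₀ ^ (-(p : ℤ)) < 0 ∧ 0 < T ∧
      ¬ ∃ y : ℝ → ℝ, y 0 = y₀ ∧
        ∀ t ∈ Set.Icc (0 : ℝ) T,
          HasDerivWithinAt y (κ * y t + lam * y t ^ (p + 1)) (Set.Icc (0 : ℝ) T) t := by
  have hαpos : 0 < α := by rw [hα]; linarith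
  have hzpow : y₀ ^ (-(p : ℤ)) = (y₀ ^ p)⁻¹ := by
    rw [zpow_neg, zpow_natCast]
  have hppos : 0 < (p : ℝ) := by exact_mod_cast hp
  -- powers
  have hcp : c ^ p < 0 := hpo.pow_neg hcneg
  have hyp : y₀ ^ p < c ^ p := hpo.strictMono_pow hy₀
  have hypneg : y₀ ^ p < 0 := lt_trans hyp hcp
  have hlamne : lam ≠ 0 := ne_of_lt hlam
  have hcpval : c ^ p = α / lam := by
    rw [eq_div_iff hlamne, hα]; linarith
  have hcpinv : (c ^ p)⁻¹ = lam / α := by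
    rw [hcpval, inv_div]
  have h1 : lam / α < (y₀ ^ p)⁻¹ := by
    rw [← hcpinv]
    exact (inv_lt_inv_of_neg hcp hypneg).mpr hyp
  have h2 : (y₀ ^ p)⁻¹ < 0 := inv_neg''.mpr hypneg
  have hratio : 1 < (lam / α) / (lam / α - y₀ ^ (-(p : ℤ))) := by
    rw [hzpow]
    rw [lt_div_iff_of_neg (by linarith : lam / α - (y₀ ^ p)⁻¹ < 0)]
    linarith
  have hTpos : 0 < T := by
    rw [hT]
    apply mul_pos
    · positivity
    · exact Real.log_pos hratio
  refine ⟨by rw [hzpow]; exact h1, by rw [hzpow]; exact h2, hTpos, ?_⟩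
  rintro ⟨y, hy0, hy⟩
  -- Step 1: y stays below c on [0, T]
  have hbelow : ∀ t ∈ Set.Icc (0 : ℝ) T, y t < c := by
    by_contra hcon
    push_neg at hcon
    obtain ⟨t₀, ht₀, hct₀⟩ := hcon
    -- continuity of y
    have hycont : ContinuousOn y (Set.Icc (0:ℝ) T) := fun t ht =>
      (hy t ht).continuousWithinAt
    set A : Set ℝ := {t ∈ Set.Icc (0:ℝ) T | c ≤ y t} with hA
    have hAne : A.Nonempty := ⟨t₀, ht₀, hct₀⟩
    have hAbdd : BddBelow A := ⟨0, fun x hx => hx.1.1⟩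
    set s := sInf A with hs
    have hAclosed : IsClosed A := by
      have : A = Set.Icc (0:ℝ) T ∩ y ⁻¹' (Set.Ici c) := by
        ext x; simp [hA, Set.mem_preimage, and_comm]
      rw [this]
      exact ContinuousOn.preimage_isClosed_of_isClosed hycont isClosed_Icc isClosed_Ici
    have hsA : s ∈ A := hAclosed.csInf_mem hAne hAbdd
    have hsIcc : s ∈ Set.Icc (0:ℝ) T := hsA.1
    have hsy : c ≤ y s := hsA.2
    have hspos : 0 < s := by
      rcases lt_or_eq_of_le hsIcc.1 with h | h
      · exact h
      · exfalso; rw [← h] at hsy; rw [hy0] at hsy; linarith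
    -- for t < s in [0,s], y t < c
    have hlt : ∀ t ∈ Set.Ico (0:ℝ) s, y t < c := by
      intro t ht
      by_contra hh
      push_neg at hh
      have : t ∈ A := ⟨⟨ht.1, le_trans (le_of_lt ht.2) hsIcc.2⟩, hh⟩
      exact absurd (csInf_le hAbdd this) (not_le.mpr ht.2)
    -- y s = c
    have hys : y s = c := by
      refine le_antisymm ?_ hsy
      -- limit from the left
      by_contra hh
      push_neg at hh
      have hcont := (hycont s hsIcc).mono
        (show Set.Icc (0:ℝ) s ⊆ Set.Icc 0 T from Set.Icc_subset_Icc le_rfl hsIcc.2)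
      -- y is continuous at s within [0,s]; values < c on [0,s) force y s ≤ c
      have hmem : s ∈ Set.Icc (0:ℝ) s := Set.right_mem_Icc.mpr (le_of_lt hspos)
      have : ∀ᶠ x in nhdsWithin s (Set.Icc (0:ℝ) s), y x < c ∨ x = s := by
        filter_upwards [self_mem_nhdsWithin] with x hx
        rcases lt_or_eq_of_le hx.2 with h | h
        · exact Or.inl (hlt x ⟨hx.1, h⟩)
        · exact Or.inr h
      -- use that y s is a limit of y x for x → s within [0,s]
      have htend : Filter.Tendsto y (nhdsWithin s (Set.Icc (0:ℝ) s)) (nhds (y s)) :=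
        hcont
      have hne' : (nhdsWithin s (Set.Icc (0:ℝ) s)).NeBot :=
        nhdsWithin_neBot_of_mem hmem
      have hle : y s ≤ c := by
        have : ∀ᶠ x in nhdsWithin s (Set.Ico (0:ℝ) s), y x ≤ c := by
          filter_upwards [self_mem_nhdsWithin] with x hx
          exact le_of_lt (hlt x hx)
        have hne'' : (nhdsWithin s (Set.Ico (0:ℝ) s)).NeBot :=
          right_nhdsWithin_Ico_neBot hspos
        have htend' : Filter.Tendsto y (nhdsWithin s (Set.Ico (0:ℝ) s)) (nhds (y s)) :=
          htend.mono_left (nhdsWithin_mono s Set.Ico_subset_Icc_self)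
        exact le_of_tendsto htend' this
      linarith
    -- now apply the formula on [0, s]
    have hys_ne : ∀ t ∈ Set.Icc (0:ℝ) s, y t ≠ 0 := by
      intro t ht
      rcases lt_or_eq_of_le ht.2 with h | h
      · exact ne_of_lt (lt_trans (hlt t ⟨ht.1, h⟩) hcneg)
      · rw [h, hys]; exact ne_of_lt hcneg
    have hy' : ∀ t ∈ Set.Icc (0:ℝ) s,
        HasDerivWithinAt y (κ * y t + lam * y t ^ (p + 1)) (Set.Icc (0:ℝ) s) t := by
      intro t ht
      exact (hy t (Set.Icc_subset_Icc le_rfl hsIcc.2 ht)).mono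
        (Set.Icc_subset_Icc le_rfl hsIcc.2)
    have hform := ode_inv_formula p κ α lam hα s (le_of_lt hspos) y hy' hys_ne hαpos hp
    have hfs := hform s (Set.right_mem_Icc.mpr (le_of_lt hspos))
    rw [hys, hy0, hcpinv] at hfs
    -- (c^p)⁻¹ = lam/α, so ((y₀^p)⁻¹ - lam/α) * exp(...) = 0
    have hexp := Real.exp_pos ((p:ℝ) * α * s)
    nlinarith [hfs, h1]
  -- Step 2: apply the formula on [0, T] and derive the contradiction at t = T
  have hys_ne : ∀ t ∈ Set.Icc (0:ℝ) T, y t ≠ 0 := fun t ht =>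
    ne_of_lt (lt_trans (hbelow t ht) hcneg)
  have hform := ode_inv_formula p κ α lam hα T (le_of_lt hTpos) y hy hys_ne hαpos hp
  have hfT := hform T (Set.right_mem_Icc.mpr (le_of_lt hTpos))
  rw [hy0] at hfT
  -- exp(pα T) = (lam/α) / (lam/α - (y₀^p)⁻¹)
  have hden : lam / α - y₀ ^ (-(p:ℤ)) < 0 := by rw [hzpow]; linarith
  have hratio_pos : 0 < (lam / α) / (lam / α - y₀ ^ (-(p:ℤ))) :=
    div_pos_of_neg_of_neg (div_neg_of_neg_of_pos hlam hαpos) hden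
  have hexpT : Real.exp ((p:ℝ) * α * T) = (lam / α) / (lam / α - y₀ ^ (-(p:ℤ))) := by
    rw [hT]
    have : (p:ℝ) * α * ((1 / ((p : ℝ) * α)) *
        Real.log ((lam / α) / (lam / α - y₀ ^ (-(p : ℤ))))) =
        Real.log ((lam / α) / (lam / α - y₀ ^ (-(p : ℤ)))) := by
      field_simp
    rw [this, Real.exp_log hratio_pos]
  rw [hexpT] at hfT
  rw [hzpow] at hfT hden
  -- hfT : (y T ^ p)⁻¹ = ((y₀^p)⁻¹ - lam/α) * ((lam/α)/(lam/α - (y₀^p)⁻¹)) + lam/α = 0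
  have hyTneg : y T ^ p < 0 :=
    hpo.pow_neg (lt_trans (hbelow T (Set.right_mem_Icc.mpr (le_of_lt hTpos))) hcneg)
  have hyTinv : (y T ^ p)⁻¹ < 0 := inv_neg''.mpr hyTneg
  have hdne : lam/α - (y₀ ^ p)⁻¹ ≠ 0 := ne_of_lt hden
  have e : (lam/α - (y₀ ^ p)⁻¹)/(lam/α - (y₀ ^ p)⁻¹) = 1 := div_self hdne
  have hzero : ((y₀ ^ p)⁻¹ - lam/α) * ((lam/α)/(lam/α - (y₀ ^ p)⁻¹)) + lam/α = 0 := by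
    linear_combination (-(lam/α)) * e
  rw [hzero] at hfT
  linarith
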